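/- Fix c ∈ (0,1] and φ ∈ [0,π] with c < 1 or φ < π. For m, n ∈ ℤ define K(m,n) = (1/2π)∫_{−φ}^{φ} (1+c e^{iθ})^n e^{imθ} dθ if n ≤ 0 and K(m,n) = (1/2π)∫_{φ}^{2π−φ} (1+c e^{iθ})^n e^{imθ} dθ if n > 0 (the translation-invariant dynamical discrete sine kernel), and define K′(m,n) = (1/2π)∫_{−(π−φ)}^{π−φ} (1−c e^{iθ})^n e^{imθ} dθ if n ≥ 0 and K′(m,n) = (1/2π)∫_{π−φ}^{π+φ} (1−c e^{iθ})^n e^{imθ} dθ if n < 0 (the Okounkov–Reshetikhin incomplete beta kernel after the linear transformation of the lattice, with arc angle π−φ). Then K(m,n) = (−1)^m·K′(m,n) for all n ≠ 0, and K(m,0) = δ_{m,0} − (−1)^m·K′(m,0); i.e., up to conjugation by a gauge factor (which does not change correlation functions), the two kernels are related by the particle–hole involution K ↦ δ − K composed with a linear transformation of the lattice ℤ². -/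

import Mathlib

open Real Complex

/-- The translation-invariant dynamical discrete sine kernel: for `n ≤ 0` integrate over
the arc `[−φ, φ]` and for `n > 0` over the arc `[φ, 2π−φ]`. -/
noncomputable def Ksine (c φ : ℝ) (m n : ℤ) : ℂ :=
  (1 / (2 * Real.pi)) *
    (if n ≤ 0 then
      ∫ θ in (-φ)..φ, (1 + (c : ℂ) * Complex.exp (θ * Complex.I)) ^ n
        * Complex.exp ((m : ℂ) * θ * Complex.I)
    else
      ∫ θ in φ..(2 * Real.pi - φ), (1 + (c : ℂ) * Complex.exp (θ * Complex.I)) ^ n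
        * Complex.exp ((m : ℂ) * θ * Complex.I))

/-- The Okounkov–Reshetikhin incomplete beta kernel after the linear transformation of
the lattice, with arc angle `π − φ`: for `n ≥ 0` integrate over `[−(π−φ), π−φ]` and for
`n < 0` over `[π−φ, π+φ]`. -/
noncomputable def Kor (c φ : ℝ) (m n : ℤ) : ℂ :=
  (1 / (2 * Real.pi)) *
    (if 0 ≤ n then
      ∫ θ in (-(Real.pi - φ))..(Real.pi - φ),
        (1 - (c : ℂ) * Complex.exp (θ * Complex.I)) ^ n
          * Complex.exp ((m : ℂ) * θ * Complex.I)
    else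
      ∫ θ in (Real.pi - φ)..(Real.pi + φ),
        (1 - (c : ℂ) * Complex.exp (θ * Complex.I)) ^ n
          * Complex.exp ((m : ℂ) * θ * Complex.I))

lemma expMPi (m : ℤ) : Complex.exp ((m : ℂ) * (Real.pi : ℂ) * Complex.I) = (-1 : ℂ) ^ m := by
  rw [mul_assoc, Complex.exp_int_mul, Complex.exp_pi_mul_I]

lemma negone_sq (m : ℤ) : (-1 : ℂ) ^ m * (-1 : ℂ) ^ m = 1 := by
  rw [← zpow_add₀ (by norm_num : (-1:ℂ) ≠ 0), ← two_mul, zpow_mul]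
  norm_num

/-- Change of variables `θ ↦ θ + π` relating the two integrands. -/
lemma shift_eq (c : ℝ) (m n : ℤ) (a b : ℝ) :
    (∫ θ in (a + Real.pi)..(b + Real.pi),
        (1 - (c : ℂ) * Complex.exp (θ * Complex.I)) ^ n
          * Complex.exp ((m : ℂ) * θ * Complex.I))
    = (-1 : ℂ) ^ m * ∫ θ in a..b,
        (1 + (c : ℂ) * Complex.exp (θ * Complex.I)) ^ n
          * Complex.exp ((m : ℂ) * θ * Complex.I) := by
  rw [← intervalIntegral.integral_comp_add_right
      (fun θ : ℝ => (1 - (c : ℂ) * Complex.exp (θ * Complex.I)) ^ n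
        * Complex.exp ((m : ℂ) * θ * Complex.I)) Real.pi,
    ← intervalIntegral.integral_const_mul]
  apply intervalIntegral.integral_congr
  intro θ _
  have h1 : Complex.exp (((θ : ℝ) + Real.pi : ℝ) * Complex.I)
      = - Complex.exp ((θ : ℂ) * Complex.I) := by
    push_cast
    rw [add_mul, Complex.exp_add, Complex.exp_pi_mul_I]
    ring
  have h2 : Complex.exp ((m : ℂ) * (((θ : ℝ) + Real.pi : ℝ) : ℂ) * Complex.I)
      = (-1 : ℂ) ^ m * Complex.exp ((m : ℂ) * θ * Complex.I) := by
    push_cast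
    rw [show (m : ℂ) * ((θ : ℂ) + (Real.pi : ℂ)) * Complex.I
        = (m : ℂ) * θ * Complex.I + (m : ℂ) * (Real.pi : ℂ) * Complex.I by ring,
      Complex.exp_add, expMPi]
    ring
  simp only [h1, h2]
  have h3 : (1 - (c : ℂ) * -Complex.exp ((θ:ℂ) * Complex.I))
      = 1 + (c : ℂ) * Complex.exp ((θ:ℂ) * Complex.I) := by ring
  rw [h3]
  ring

/-- Change of variables `θ ↦ θ + π`, the other pairing. -/
lemma shift_eq' (c : ℝ) (m n : ℤ) (a b : ℝ) :
    (∫ θ in (a + Real.pi)..(b + Real.pi),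
        (1 + (c : ℂ) * Complex.exp (θ * Complex.I)) ^ n
          * Complex.exp ((m : ℂ) * θ * Complex.I))
    = (-1 : ℂ) ^ m * ∫ θ in a..b,
        (1 - (c : ℂ) * Complex.exp (θ * Complex.I)) ^ n
          * Complex.exp ((m : ℂ) * θ * Complex.I) := by
  rw [← intervalIntegral.integral_comp_add_right
      (fun θ : ℝ => (1 + (c : ℂ) * Complex.exp (θ * Complex.I)) ^ n
        * Complex.exp ((m : ℂ) * θ * Complex.I)) Real.pi,
    ← intervalIntegral.integral_const_mul]
  apply intervalIntegral.integral_congr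
  intro θ _
  have h1 : Complex.exp (((θ : ℝ) + Real.pi : ℝ) * Complex.I)
      = - Complex.exp ((θ : ℂ) * Complex.I) := by
    push_cast
    rw [add_mul, Complex.exp_add, Complex.exp_pi_mul_I]
    ring
  have h2 : Complex.exp ((m : ℂ) * (((θ : ℝ) + Real.pi : ℝ) : ℂ) * Complex.I)
      = (-1 : ℂ) ^ m * Complex.exp ((m : ℂ) * θ * Complex.I) := by
    push_cast
    rw [show (m : ℂ) * ((θ : ℂ) + (Real.pi : ℂ)) * Complex.I
        = (m : ℂ) * θ * Complex.I + (m : ℂ) * (Real.pi : ℂ) * Complex.I by ring,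
      Complex.exp_add, expMPi]
    ring
  simp only [h1, h2]
  have h3 : (1 + (c : ℂ) * -Complex.exp ((θ:ℂ) * Complex.I))
      = 1 - (c : ℂ) * Complex.exp ((θ:ℂ) * Complex.I) := by ring
  rw [h3]
  ring

/-- Integral of `e^{imθ}` over a full period. -/
lemma circle_int (m : ℤ) (φ : ℝ) :
    (∫ θ in (-φ)..(2 * Real.pi - φ), Complex.exp ((m : ℂ) * θ * Complex.I))
    = if m = 0 then (2 * Real.pi : ℂ) else 0 := by
  rcases eq_or_ne m 0 with hm | hm
  · simp [hm, sub_neg_eq_add]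
  · rw [if_neg hm]
    have hc : ((m : ℂ) * Complex.I) ≠ 0 := by
      simp [Complex.ext_iff, hm]
    have h : ∀ θ : ℝ, (m : ℂ) * (θ : ℂ) * Complex.I = ((m : ℂ) * Complex.I) * θ := by
      intro θ; ring
    simp only [h]
    rw [integral_exp_mul_complex hc]
    have : Complex.exp ((m : ℂ) * Complex.I * ((2 * Real.pi - φ : ℝ) : ℂ))
        = Complex.exp ((m : ℂ) * Complex.I * ((-φ : ℝ) : ℂ)) := by
      push_cast
      rw [show (m : ℂ) * Complex.I * (2 * Real.pi - φ)
          = (m : ℂ) * (2 * Real.pi * Complex.I) + (m : ℂ) * Complex.I * (-φ) by ring,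
        Complex.exp_add, Complex.exp_int_mul_two_pi_mul_I, one_mul]
    rw [this, sub_self, zero_div]

/-- Up to the gauge factor `(−1)^m`, the dynamical discrete sine kernel and the
Okounkov–Reshetikhin kernel are related by the particle–hole involution `K ↦ δ − K`
composed with a linear transformation of the lattice. -/
theorem stmt_16 (c φ : ℝ) (hc0 : 0 < c) (hc1 : c ≤ 1)
    (hφ0 : 0 ≤ φ) (hφπ : φ ≤ Real.pi) (hnd : c < 1 ∨ φ < Real.pi) :
    (∀ m n : ℤ, n ≠ 0 → Ksine c φ m n = (-1 : ℂ) ^ m * Kor c φ m n)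
    ∧ (∀ m : ℤ, Ksine c φ m 0 =
        (if m = 0 then 1 else 0) - (-1 : ℂ) ^ m * Kor c φ m 0) := by
  have hπ : (2 * Real.pi : ℂ) ≠ 0 := by
    simp [Real.pi_ne_zero, Complex.ext_iff]
  constructor
  · intro m n hn
    rcases lt_or_gt_of_ne hn with hneg | hpos
    · -- n < 0 : Ksine over [-φ, φ], Kor over [π-φ, π+φ]
      have ha : Real.pi - φ = -φ + Real.pi := by ring
      have hb : Real.pi + φ = φ + Real.pi := by ring
      rw [Ksine, Kor, if_pos hneg.le, if_neg (by omega), ha, hb, shift_eq]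
      have hr : (-1:ℂ)^m * ((1 / (2 * (Real.pi:ℂ))) * ((-1:ℂ)^m * ∫ θ in (-φ)..φ,
          (1 + (c : ℂ) * Complex.exp (θ * Complex.I)) ^ n
            * Complex.exp ((m : ℂ) * θ * Complex.I)))
          = ((-1:ℂ)^m * (-1:ℂ)^m) * ((1 / (2 * (Real.pi:ℂ))) * ∫ θ in (-φ)..φ,
          (1 + (c : ℂ) * Complex.exp (θ * Complex.I)) ^ n
            * Complex.exp ((m : ℂ) * θ * Complex.I)) := by ring
      push_cast
      push_cast at hr
      rw [hr, negone_sq, one_mul]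
    · -- n > 0 : Ksine over [φ, 2π-φ], Kor over [-(π-φ), π-φ]
      have hk := shift_eq' c m n (-(Real.pi - φ)) (Real.pi - φ)
      rw [show -(Real.pi - φ) + Real.pi = φ by ring,
          show (Real.pi - φ) + Real.pi = 2 * Real.pi - φ by ring] at hk
      rw [Ksine, Kor, if_neg (by omega), if_pos hpos.le, hk]
      push_cast
      ring
  · intro m
    have hk := shift_eq c m 0 (-(Real.pi - φ)) (Real.pi - φ)
    rw [show -(Real.pi - φ) + Real.pi = φ by ring,
        show (Real.pi - φ) + Real.pi = 2 * Real.pi - φ by ring] at hk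
    simp only [zpow_zero, one_mul] at hk
    have hadd : (∫ θ in (-φ)..φ, Complex.exp ((m : ℂ) * θ * Complex.I))
        + (∫ θ in φ..(2 * Real.pi - φ), Complex.exp ((m : ℂ) * θ * Complex.I))
        = ∫ θ in (-φ)..(2 * Real.pi - φ), Complex.exp ((m : ℂ) * θ * Complex.I) := by
      apply intervalIntegral.integral_add_adjacent_intervals <;>
        exact (Continuous.intervalIntegrable (by fun_prop) _ _)
    rw [Ksine, Kor]
    simp only [le_refl, if_pos, zpow_zero, one_mul]
    have h2 : (-1:ℂ)^m * ((1 / (2 * (Real.pi:ℂ))) * ∫ θ in (-(Real.pi - φ))..(Real.pi - φ),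
        Complex.exp ((m : ℂ) * θ * Complex.I))
        = (1 / (2 * (Real.pi:ℂ))) * ∫ θ in φ..(2 * Real.pi - φ),
          Complex.exp ((m : ℂ) * θ * Complex.I) := by
      rw [hk]; ring
    push_cast at h2 ⊢
    rw [h2]
    have hsplit : (∫ θ in φ..(2 * Real.pi - φ), Complex.exp ((m : ℂ) * θ * Complex.I))
        = (if m = 0 then (2 * Real.pi : ℂ) else 0)
          - ∫ θ in (-φ)..φ, Complex.exp ((m : ℂ) * θ * Complex.I) := by
      rw [← circle_int m φ, ← hadd]; ring
    rw [hsplit]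
    rcases eq_or_ne m 0 with hm | hm
    · simp only [hm, if_pos rfl, Int.cast_zero]
      field_simp
      simp only [↓reduceIte, zero_mul, mul_one]
      ring
    · simp only [if_neg hm]
      ring
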